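/- Let V be a finite-dimensional real vector space with symmetric positive definite bilinear form a, and let V₁,...,V_N be subspaces with a-orthogonal projections Pᵢ. Suppose the index set {1,...,N} admits a coloring into at most C colors such that subspaces of the same color are mutually a-orthogonal. Then for all v ∈ V, a((Σᵢ Pᵢ) v, v) ≤ C·a(v,v). -/
import Mathlib


open Finset

/-- Coloring upper bound in additive Schwarz theory. -/
theorem stmt8 {V : Type*} [AddCommGroup V] [Module ℝ V] [FiniteDimensional ℝ V]
    (a : V →ₗ[ℝ] V →ₗ[ℝ] ℝ)
    (ha_symm : ∀ v w : V, a v w = a w v)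
    (ha_pos : ∀ v : V, v ≠ 0 → 0 < a v v)
    (N C : ℕ)
    (Vi : Fin N → Submodule ℝ V)
    (P : Fin N → V →ₗ[ℝ] V)
    (hPmem : ∀ i, ∀ v : V, P i v ∈ Vi i)
    (hPdef : ∀ i, ∀ v : V, ∀ w ∈ Vi i, a (P i v) w = a v w)
    (c : Fin N → Fin C)
    (hcolor : ∀ i j, i ≠ j → c i = c j →
      ∀ vi ∈ Vi i, ∀ vj ∈ Vi j, a vi vj = 0) :
    ∀ v : V, a ((∑ i, P i) v) v ≤ (C : ℝ) * a v v := by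
  intro v
  have hnn : ∀ w : V, 0 ≤ a w w := by
    intro w
    rcases eq_or_ne w 0 with h | h
    · simp [h]
    · exact (ha_pos w h).le
  have hPv : ∀ i, a (P i v) v = a (P i v) (P i v) := by
    intro i
    rw [ha_symm (P i v) v, ← hPdef i v (P i v) (hPmem i v)]
  -- per color bound
  have hcol : ∀ k : Fin C,
      ∑ i ∈ univ.filter (fun i => c i = k), a (P i v) v ≤ a v v := by
    intro k
    set s := univ.filter (fun i : Fin N => c i = k) with hs
    set Q : V := ∑ i ∈ s, P i v with hQ
    have hQv : a Q v = ∑ i ∈ s, a (P i v) v := by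
      simp [hQ, map_sum]
    have hQQ : a Q Q = ∑ i ∈ s, a (P i v) v := by
      have : a Q Q = ∑ i ∈ s, ∑ j ∈ s, a (P i v) (P j v) := by
        simp only [hQ, map_sum, LinearMap.coe_sum, Finset.sum_apply]
        exact Finset.sum_comm
      rw [this]
      refine Finset.sum_congr rfl fun i hi => ?_
      rw [Finset.sum_eq_single i]
      · rw [← hPv i]
      · intro j hj hji
        have hci : c i = k := by simpa [hs] using hi
        have hcj : c j = k := by simpa [hs] using hj
        exact hcolor i j (Ne.symm hji) (hci.trans hcj.symm)
          (P i v) (hPmem i v) (P j v) (hPmem j v)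
      · intro h; exact absurd hi h
    have hexp : a (v - Q) (v - Q) = a v v - a v Q - a Q v + a Q Q := by
      simp [map_sub]; ring
    have h0 := hnn (v - Q)
    have hsymmQ : a v Q = a Q v := ha_symm v Q
    have hle : a Q v ≤ a v v := by
      rw [hexp, hsymmQ, hQQ, ← hQv] at h0
      linarith
    rw [← hQv]
    exact hle
  calc a ((∑ i, P i) v) v = ∑ i, a (P i v) v := by
        simp [map_sum]
    _ = ∑ k : Fin C, ∑ i ∈ univ.filter (fun i => c i = k), a (P i v) v := by
        rw [Finset.sum_fiberwise_of_maps_to]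
        intro i _; exact Finset.mem_univ (c i)
    _ ≤ ∑ _k : Fin C, a v v := Finset.sum_le_sum fun k _ => hcol k
    _ = (C : ℝ) * a v v := by simp [Finset.sum_const, nsmul_eq_mul]
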